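/- arXiv:1208.3750 — 2 statements merged into one kernel-verified Lean document; each statement's English description precedes it below -/
import Mathlib

section
/- Let V be a finite-dimensional complex vector space with a nondegenerate alternating bilinear form ω, and let h : V → V be a linear automorphism of finite order preserving ω (ω(h v, h w) = ω(v, w)). Then the restriction of ω to the fixed subspace V^h = {v : h v = v} is nondegenerate; in particular dim V^h is even. -/
open Module

lemma aux_even {W : Type*} [AddCommGroup W] [Module ℂ W] [FiniteDimensional ℂ W]
    (B : W →ₗ[ℂ] W →ₗ[ℂ] ℂ) (halt : ∀ v, B v v = 0) (hs : B.SeparatingLeft) :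
    Even (Module.finrank ℂ W) := by
  have hskew : ∀ x y, B x y = -B y x := by
    intro x y
    have h0 := halt (x + y)
    simp only [map_add, LinearMap.add_apply, halt] at h0
    linear_combination h0
  by_contra hodd
  set n := Module.finrank ℂ W with hn
  have b := Module.finBasis ℂ W
  set M := LinearMap.toMatrix₂ b b B with hM
  have hdet : M.det ≠ 0 := (LinearMap.separatingLeft_iff_det_ne_zero b).mp hs
  have hMT : Matrix.transpose M = -M := by
    ext i j
    simp only [Matrix.transpose_apply, Matrix.neg_apply, hM, LinearMap.toMatrix₂_apply]
    exact hskew _ _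
  have h1 : M.det = (-1 : ℂ) ^ n * M.det := by
    conv_lhs => rw [← Matrix.det_transpose M, hMT]
    rw [Matrix.det_neg, Fintype.card_fin]
  have hno : Odd n := Nat.not_even_iff_odd.mp hodd
  rw [hno.neg_one_pow] at h1
  apply hdet
  linear_combination h1 / 2

theorem stmt_4 (V : Type*) [AddCommGroup V] [Module ℂ V] [FiniteDimensional ℂ V]
    (ω : V →ₗ[ℂ] V →ₗ[ℂ] ℂ)
    (halt : ∀ v, ω v v = 0)
    (hnd : ∀ v, (∀ w, ω v w = 0) → v = 0)
    (h : V ≃ₗ[ℂ] V) (m : ℕ) (hm : 0 < m) (hord : h ^ m = 1)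
    (hinv : ∀ v w, ω (h v) (h w) = ω v w) :
    (∀ v ∈ LinearMap.ker (h.toLinearMap - LinearMap.id),
      (∀ w ∈ LinearMap.ker (h.toLinearMap - LinearMap.id), ω v w = 0) → v = 0) ∧
    Even (Module.finrank ℂ (LinearMap.ker (h.toLinearMap - LinearMap.id))) := by
  set K := LinearMap.ker (h.toLinearMap - LinearMap.id) with hK
  have hmem : ∀ v, v ∈ K ↔ h v = v := by
    intro v
    rw [hK, LinearMap.mem_ker, LinearMap.sub_apply, LinearMap.id_apply, sub_eq_zero]
    rfl
  -- powers preserve ω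
  have hinvp : ∀ (i : ℕ) (v w : V), ω ((h ^ i) v) ((h ^ i) w) = ω v w := by
    intro i
    induction i with
    | zero => intro v w; simp
    | succ i ih =>
        intro v w
        rw [pow_succ]
        have : ∀ u : V, ((h ^ i) * h) u = (h ^ i) (h u) := fun u => rfl
        rw [this, this, ih, hinv]
  -- fixed vectors are fixed by all powers
  have hfix : ∀ (i : ℕ) (v : V), h v = v → (h ^ i) v = v := by
    intro i v hv
    induction i with
    | zero => simp
    | succ i ih =>
        rw [pow_succ]
        show (h ^ i) (h v) = v
        rw [hv, ih]
  -- key nondegeneracy claim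
  have key : ∀ v ∈ K, (∀ w ∈ K, ω v w = 0) → v = 0 := by
    intro v hv hw
    have hv' : h v = v := (hmem v).mp hv
    apply hnd
    intro u
    set w : V := (m : ℂ)⁻¹ • ∑ i ∈ Finset.range m, (h ^ i) u with hwdef
    have hwK : w ∈ K := by
      rw [hmem]
      rw [hwdef, map_smul, map_sum]
      congr 1
      have hshift : ∀ i : ℕ, h ((h ^ i) u) = (h ^ (i + 1)) u := by
        intro i; rw [pow_succ']; rfl
      simp only [hshift]
      have hfm : (h ^ m) u = (h ^ 0) u := by rw [hord]; simp
      have h2 : (∑ i ∈ Finset.range m, (h ^ (i + 1)) u) + (h ^ 0) u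
          = (∑ i ∈ Finset.range m, (h ^ i) u) + (h ^ m) u := by
        rw [← Finset.sum_range_succ' (fun i => (h ^ i) u) m, Finset.sum_range_succ]
      rw [hfm] at h2
      exact add_right_cancel h2
    have h0 : ω v w = 0 := hw w hwK
    have h1 : ω v w = ω v u := by
      rw [hwdef, map_smul, map_sum]
      have : ∀ i ∈ Finset.range m, ω v ((h ^ i) u) = ω v u := by
        intro i _
        conv_lhs => rw [← hfix i v hv']
        exact hinvp i v u
      rw [Finset.sum_congr rfl this, Finset.sum_const, Finset.card_range]
      have hm0 : (m : ℂ) ≠ 0 := Nat.cast_ne_zero.mpr hm.ne'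
      rw [← Nat.cast_smul_eq_nsmul ℂ, smul_eq_mul, smul_eq_mul, ← mul_assoc,
        inv_mul_cancel₀ hm0, one_mul]
    rw [← h1, h0]
  refine ⟨key, ?_⟩
  -- restricted form
  set B : K →ₗ[ℂ] K →ₗ[ℂ] ℂ := (ω.domRestrict K).compl₂ K.subtype with hB
  have hBapp : ∀ x y : K, B x y = ω (x : V) (y : V) := fun x y => rfl
  apply aux_even B
  · intro v; rw [hBapp]; exact halt _
  · intro x hx
    have : (x : V) = 0 := by
      apply key (x : V) x.2
      intro w hwK
      have := hx ⟨w, hwK⟩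
      rwa [hBapp] at this
    exact Subtype.ext this
end

section
/- In the exterior algebra of ℂ^{2(n−1)} ⊕ conjugate part, with n ≥ 3: given 1-forms dz¹_i, dz²_i, dz̄²_i for 1 ≤ i ≤ n satisfying Σᵢ dz¹_i = 0, Σᵢ dz²_i = 0, Σᵢ dz̄²_i = 0, and with {dz¹_i, dz²_i, dz̄²_i : 1 ≤ i ≤ n−1} part of a basis of the dual space, the element τ̃ = Σ_{i=1}^{n} dz¹_i ∧ dz²_i ∧ dz̄²_i is nonzero. -/
open ExteriorAlgebra

theorem sumExtend_inl' {K V ι : Type*} [Field K] [AddCommGroup V] [Module K V] {v : ι → V}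
    (hs : LinearIndependent K v) (i : ι) : Module.Basis.sumExtend hs (Sum.inl i) = v i := by
  simp only [Module.Basis.sumExtend, Module.Basis.reindex_apply, Equiv.symm_symm]
  rw [Module.Basis.extend_apply_self]
  rfl

theorem stmt_9 (n : ℕ) (hn : 3 ≤ n) (W : Type*) [AddCommGroup W] [Module ℂ W]
    (f : Fin 3 → Fin n → W)
    (hsum : ∀ q : Fin 3, ∑ i : Fin n, f q i = 0)
    (hind : LinearIndependent ℂ
      (fun qi : Fin 3 × Fin (n - 1) => f qi.1 (Fin.castLE (Nat.sub_le n 1) qi.2))) :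
    (∑ i : Fin n, ExteriorAlgebra.ι ℂ (f 0 i) * ExteriorAlgebra.ι ℂ (f 1 i) *
      ExteriorAlgebra.ι ℂ (f 2 i)) ≠ 0 := by
  classical
  obtain ⟨m, rfl⟩ : ∃ m, n = m + 3 := ⟨n - 3, by omega⟩
  have hind' : LinearIndependent ℂ
      (fun qi : Fin 3 × Fin (m + 2) => f qi.1 (Fin.castSucc qi.2)) := hind
  let B := Module.Basis.sumExtend hind'
  have hB : ∀ qi : Fin 3 × Fin (m + 2), B (Sum.inl qi) = f qi.1 (Fin.castSucc qi.2) := by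
    intro qi
    exact sumExtend_inl' hind' qi
  let idx : Fin 3 → Fin (m + 2) := ![0, 1, 1]
  let c : Fin 3 → W →ₗ[ℂ] ℂ := fun q => B.coord (Sum.inl (q, idx q))
  have hc : ∀ q p (j : Fin (m + 2)), c q (f p (Fin.castSucc j)) =
      if p = q ∧ j = idx q then 1 else 0 := by
    intro q p j
    rw [show f p (Fin.castSucc j) = B (Sum.inl (p, j)) from (hB (p, j)).symm]
    simp only [c, Module.Basis.coord_apply, Module.Basis.repr_self, Finsupp.single_apply]
    by_cases h1 : p = q <;> by_cases h2 : j = idx q <;>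
      simp [h1, h2, Prod.ext_iff, Sum.inl.injEq]
  have hlast : ∀ p, f p (Fin.last (m + 2)) =
      - ∑ j : Fin (m + 2), f p (Fin.castSucc j) := by
    intro p
    have h := hsum p
    rw [Fin.sum_univ_castSucc] at h
    rw [add_comm] at h
    exact eq_neg_of_add_eq_zero_left h
  have hval : ∀ q p (i : Fin (m + 3)), c q (f p i) =
      if p = q then
        (if i = Fin.castSucc (idx q) then 1 else if i = Fin.last (m + 2) then -1 else 0)
      else 0 := by
    intro q p i
    induction i using Fin.lastCases with
    | last =>
      rw [hlast, map_neg, map_sum,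
        Finset.sum_congr rfl (fun j _ => hc q p j)]
      have hne : Fin.last (m + 2) ≠ Fin.castSucc (idx q) :=
        (Fin.castSucc_lt_last (idx q)).ne'
      by_cases h : p = q <;> simp [h, hne]
    | cast j =>
      rw [hc]
      have hne : Fin.castSucc j ≠ Fin.last (m + 2) := (Fin.castSucc_lt_last j).ne
      by_cases h1 : p = q <;> by_cases h2 : j = idx q <;>
        simp [h1, h2, hne, Fin.castSucc_inj]
  let gmul : MultilinearMap ℂ (fun _ : Fin 3 => W) ℂ :=
    (MultilinearMap.mkPiAlgebra ℂ (Fin 3) ℂ).compLinearMap c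
  let g := MultilinearMap.alternatization gmul
  let F : ∀ i : ℕ, W [⋀^Fin i]→ₗ[ℂ] ℂ :=
    Function.update (fun i => (0 : W [⋀^Fin i]→ₗ[ℂ] ℂ)) 3 g
  intro hτ
  have h0 := congrArg (ExteriorAlgebra.liftAlternating (R := ℂ) (M := W) (N := ℂ) F) hτ
  rw [map_zero, map_sum] at h0
  have harr : ∀ (i : Fin (m + 3)) (q : Fin 3), ![f 0 i, f 1 i, f 2 i] q = f q i := by
    intro i q
    fin_cases q <;> rfl
  have hterm : ∀ i : Fin (m + 3),
      ExteriorAlgebra.liftAlternating (R := ℂ) (M := W) (N := ℂ) F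
        (ι ℂ (f 0 i) * ι ℂ (f 1 i) * ι ℂ (f 2 i)) = g ![f 0 i, f 1 i, f 2 i] := by
    intro i
    have hmul : ι ℂ (f 0 i) * ι ℂ (f 1 i) * ι ℂ (f 2 i)
        = ιMulti ℂ 3 ![f 0 i, f 1 i, f 2 i] := by
      rw [ιMulti_apply]
      simp [List.ofFn_succ, mul_assoc]
    rw [hmul, liftAlternating_apply_ιMulti]
    simp [F]
  let E : Fin 3 → Fin (m + 3) → ℂ := fun q i =>
    if i = Fin.castSucc (idx q) then 1 else if i = Fin.last (m + 2) then -1 else 0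
  have hg : ∀ i : Fin (m + 3), g ![f 0 i, f 1 i, f 2 i] = E 0 i * E 1 i * E 2 i := by
    intro i
    rw [show g ![f 0 i, f 1 i, f 2 i]
        = MultilinearMap.alternatization gmul ![f 0 i, f 1 i, f 2 i] from rfl,
      MultilinearMap.alternatization_apply]
    rw [Finset.sum_eq_single (1 : Equiv.Perm (Fin 3))]
    · simp only [Equiv.Perm.sign_one, one_smul, MultilinearMap.domDomCongr_apply,
        MultilinearMap.compLinearMap_apply, MultilinearMap.mkPiAlgebra_apply, gmul]
      rw [Fin.prod_univ_three]
      simp only [Equiv.Perm.one_apply, harr]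
      rw [hval 0 0 i, hval 1 1 i, hval 2 2 i]
      simp [E]
    · intro σ _ hσ
      obtain ⟨q, hq⟩ : ∃ q, σ q ≠ q := by
        by_contra h
        push_neg at h
        exact hσ (Equiv.ext h)
      have hzero : c q (![f 0 i, f 1 i, f 2 i] (σ q)) = 0 := by
        rw [harr, hval]
        simp [hq]
      simp only [MultilinearMap.domDomCongr_apply, MultilinearMap.compLinearMap_apply,
        MultilinearMap.mkPiAlgebra_apply, gmul]
      rw [Finset.prod_eq_zero (Finset.mem_univ q) hzero, smul_zero]
    · intro h
      exact absurd (Finset.mem_univ _) h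
  rw [Finset.sum_congr rfl (fun i _ => hterm i),
    Finset.sum_congr rfl (fun i _ => hg i)] at h0
  rw [Fin.sum_univ_castSucc] at h0
  have hzero01 : (0 : Fin (m + 2)) ≠ 1 := by
    intro h
    have := congrArg Fin.val h
    simp at this
  have hEcs : ∀ (q : Fin 3) (j : Fin (m + 2)),
      E q (Fin.castSucc j) = if j = idx q then 1 else 0 := by
    intro q j
    have hne : Fin.castSucc j ≠ Fin.last (m + 2) := (Fin.castSucc_lt_last j).ne
    by_cases h : j = idx q <;> simp [E, h, hne, Fin.castSucc_inj]
  have hElast : ∀ q : Fin 3, E q (Fin.last (m + 2)) = -1 := by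
    intro q
    have hne : Fin.last (m + 2) ≠ Fin.castSucc (idx q) := (Fin.castSucc_lt_last (idx q)).ne'
    simp [E, hne]
  have hcs0 : ∀ j : Fin (m + 2),
      E 0 (Fin.castSucc j) * E 1 (Fin.castSucc j) * E 2 (Fin.castSucc j) = 0 := by
    intro j
    rw [hEcs, hEcs, hEcs]
    by_cases h0' : j = idx 0
    · have : j ≠ idx 1 := by
        rw [h0']
        show (0 : Fin (m + 2)) ≠ 1
        exact hzero01
      simp [this]
    · simp [h0']
  rw [Finset.sum_congr rfl (fun j _ => hcs0 j), Finset.sum_const_zero,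
    hElast, hElast, hElast] at h0
  norm_num at h0
end
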